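/- Under the Harten setup, regard Ŝ and F̂^{(i)} as functions of the conservative variables U = (ρ, m, e) on the open set D = {(ρ, m, e) : ρ > 0, (γ−1)(e − ‖m‖²/(2ρ)) > 0}, via V = m/ρ and p = (γ−1)(e − ‖m‖²/(2ρ)). Then for every U ∈ D and every i ∈ {1,…,d}, the matrix product Hess Ŝ(U) · J_i(U) is symmetric, where Hess Ŝ(U) is the Hessian matrix of Ŝ at U and J_i(U) is the Jacobian matrix of F̂^{(i)} at U; equivalently, (Hess Ŝ(U))·J_i(U) = J_i(U)^T·(Hess Ŝ(U)). -/

import Mathlib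

open Matrix

/-- Harten's entropy function `S = β·ρ·(p·ρ^(−γ))^(1/(α+γ))`. -/
noncomputable def hartenS (γ α β ρ p : ℝ) : ℝ :=
  β * ρ * (p * ρ ^ (-γ)) ^ (1 / (α + γ))

/-- The Euler flux `F^(i) = (ρV_i, ρV_iV + p·e_i, (e+p)V_i) ∈ ℝ^(d+2)`. -/
noncomputable def eulerFlux (d : ℕ) (γ ρ p : ℝ) (V : Fin d → ℝ) (i : Fin d) :
    Fin (d + 2) → ℝ :=
  Fin.cons (α := fun _ => ℝ) (ρ * V i)
    (Fin.snoc (fun j => ρ * V i * V j + p * (if j = i then 1 else 0))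
      ((p / (γ - 1) + ρ * (∑ k, V k ^ 2) / 2 + p) * V i))

/-- Pressure as a function of the conservative variables `U = (ρ, m, e)`. -/
noncomputable def pOf (d : ℕ) (γ : ℝ) (U : Fin (d + 2) → ℝ) : ℝ :=
  (γ - 1) * (U (Fin.last (d + 1)) -
    (∑ i : Fin d, U (Fin.castSucc (Fin.succ i)) ^ 2) / (2 * U 0))

/-- Velocity `V = m/ρ` as a function of the conservative variables. -/
noncomputable def vOf (d : ℕ) (U : Fin (d + 2) → ℝ) : Fin d → ℝ :=
  fun i => U (Fin.castSucc (Fin.succ i)) / U 0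

/-- Harten's entropy function `Ŝ` as a function of the conservative variables. -/
noncomputable def hartenShat (d : ℕ) (γ α β : ℝ) (U : Fin (d + 2) → ℝ) : ℝ :=
  hartenS γ α β (U 0) (pOf d γ U)

/-- Euler flux `F̂^(i)` as a function of the conservative variables. -/
noncomputable def fluxHat (d : ℕ) (γ : ℝ) (i : Fin d) (U : Fin (d + 2) → ℝ) :
    Fin (d + 2) → ℝ :=
  eulerFlux d γ (U 0) (pOf d γ U) (vOf d U) i

/-- Hessian matrix of `Ŝ` at `U`. -/
noncomputable def hessShat (d : ℕ) (γ α β : ℝ) (U : Fin (d + 2) → ℝ) :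
    Matrix (Fin (d + 2)) (Fin (d + 2)) ℝ :=
  Matrix.of fun j k =>
    fderiv ℝ (fun X => fderiv ℝ (hartenShat d γ α β) X (Pi.single k 1)) U
      (Pi.single j 1)

/-- Jacobian matrix of `F̂^(i)` at `U`. -/
noncomputable def jacFluxHat (d : ℕ) (γ : ℝ) (i : Fin d) (U : Fin (d + 2) → ℝ) :
    Matrix (Fin (d + 2)) (Fin (d + 2)) ℝ :=
  Matrix.of fun j k => fderiv ℝ (fluxHat d γ i) U (Pi.single k 1) j

namespace HartenAux


noncomputable def gradL (n : ℕ) : (Fin n → ℝ) →L[ℝ] ((Fin n → ℝ) →L[ℝ] ℝ) :=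
  ∑ l, (ContinuousLinearMap.proj l).smulRight (ContinuousLinearMap.proj l)

noncomputable def prj {n : ℕ} (l : Fin n) : (Fin n → ℝ) →L[ℝ] ℝ :=
  ContinuousLinearMap.proj l

lemma gradL_apply {n : ℕ} (g v : Fin n → ℝ) : gradL n g v = ∑ l, g l * v l := by
  simp [gradL, ContinuousLinearMap.sum_apply, ContinuousLinearMap.smulRight_apply,
    ContinuousLinearMap.proj_apply, smul_eq_mul]

lemma gradL_single {n : ℕ} (g : Fin n → ℝ) (k : Fin n) :
    gradL n g (Pi.single k 1) = g k := by
  rw [gradL_apply]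
  simp [Pi.single_apply, mul_ite]

lemma gradL_piSingle' {n : ℕ} (l : Fin n) :
    gradL n (Pi.single l 1) = ContinuousLinearMap.proj l := by
  ext v
  rw [gradL_apply]
  simp [Pi.single_apply, ite_mul]

lemma gradL_piSingle {n : ℕ} (l : Fin n) :
    gradL n (Pi.single l 1) = prj l := gradL_piSingle' l

theorem key {n : ℕ} (f : (Fin n → ℝ) → ℝ) (g : (Fin n → ℝ) → Fin n → ℝ) (U : Fin n → ℝ)
    (h1 : ∀ᶠ X in nhds U, HasFDerivAt f (gradL n (g X)) X)
    (h2 : ∀ l, DifferentiableAt ℝ (fun X => g X l) U) :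
    (∀ k j, fderiv ℝ (fun X => fderiv ℝ f X (Pi.single k 1)) U (Pi.single j 1)
        = fderiv ℝ (fun X => g X k) U (Pi.single j 1)) ∧
    (∀ k j, fderiv ℝ (fun X => g X k) U (Pi.single j 1)
        = fderiv ℝ (fun X => g X j) U (Pi.single k 1)) := by
  have hg : DifferentiableAt ℝ g U := differentiableAt_pi.2 h2
  have hc : ∀ (v : Fin n → ℝ) (w : Fin n),
      ((gradL n).comp (fderiv ℝ g U)) v (Pi.single w 1) = fderiv ℝ (fun X => g X w) U v := by
    intro v w
    rw [ContinuousLinearMap.comp_apply, gradL_single]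
    have : fderiv ℝ g U = ContinuousLinearMap.pi (fun l => fderiv ℝ (fun X => g X l) U) :=
      fderiv_pi h2
    rw [this]
    simp [ContinuousLinearMap.pi_apply]
  constructor
  · intro k j
    have he : (fun X => fderiv ℝ f X (Pi.single k 1)) =ᶠ[nhds U] fun X => g X k := by
      filter_upwards [h1] with X hX
      rw [hX.fderiv, gradL_single]
    rw [he.fderiv_eq]
  · intro k j
    have hL : HasFDerivAt (fun X => gradL n (g X)) ((gradL n).comp (fderiv ℝ g U)) U :=
      (gradL n).hasFDerivAt.comp U hg.hasFDerivAt
    have hsymm := second_derivative_symmetric_of_eventually h1 hL (Pi.single j 1) (Pi.single k 1)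
    rw [hc _ k, hc _ j] at hsymm
    exact hsymm



variable {d : ℕ}

def mid (k : Fin d) : Fin (d + 2) := Fin.castSucc k.succ

def lst : Fin (d + 2) := Fin.last (d + 1)

lemma mid_ne_zero (k : Fin d) : mid k ≠ 0 := by
  simp [mid, Fin.ext_iff]

lemma mid_ne_lst (k : Fin d) : mid k ≠ (lst : Fin (d+2)) := by
  have := k.isLt
  simp [mid, lst, Fin.ext_iff]
  omega

lemma zero_ne_lst : (0 : Fin (d + 2)) ≠ lst := by
  simp [lst, Fin.ext_iff]

lemma mid_inj {j k : Fin d} : mid j = mid k ↔ j = k := by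
  simp [mid, Fin.ext_iff]

lemma sum_fin3 {M : Type*} [AddCommMonoid M] (g : Fin (d + 2) → M) :
    ∑ l, g l = g 0 + ((∑ k, g (mid k)) + g lst) := by
  rw [Fin.sum_univ_succ, Fin.sum_univ_castSucc]
  simp only [Fin.succ_castSucc, Fin.succ_last]
  rfl

def vec3 {M : Type*} (c0 : M) (cm : Fin d → M) (ce : M) : Fin (d + 2) → M :=
  Fin.cons c0 (Fin.snoc cm ce)

@[simp] lemma vec3_zero {M : Type*} (c0 : M) (cm : Fin d → M) (ce : M) :
    vec3 c0 cm ce 0 = c0 := rfl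

@[simp] lemma vec3_mid {M : Type*} (c0 : M) (cm : Fin d → M) (ce : M) (k : Fin d) :
    vec3 c0 cm ce (mid k) = cm k := by
  have : mid k = Fin.succ (Fin.castSucc k) := (Fin.succ_castSucc k).symm
  rw [vec3, this, Fin.cons_succ, Fin.snoc_castSucc]

@[simp] lemma vec3_lst {M : Type*} (c0 : M) (cm : Fin d → M) (ce : M) :
    vec3 c0 cm ce lst = ce := by
  have : (lst : Fin (d+2)) = Fin.succ (Fin.last d) := rfl
  rw [vec3, this, Fin.cons_succ, Fin.snoc_last]

-- Pi.single facts
@[simp] lemma single_zero_mid (k : Fin d) : (Pi.single 0 1 : Fin (d+2) → ℝ) (mid k) = 0 := by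
  simp [Pi.single_apply, mid_ne_zero k]

@[simp] lemma single_zero_lst : (Pi.single 0 1 : Fin (d+2) → ℝ) lst = 0 := by
  simp [Pi.single_apply, (zero_ne_lst (d := d)).symm]

@[simp] lemma single_lst_zero : (Pi.single lst 1 : Fin (d+2) → ℝ) 0 = 0 := by
  simp [Pi.single_apply, zero_ne_lst (d := d)]

@[simp] lemma single_lst_mid (k : Fin d) : (Pi.single lst 1 : Fin (d+2) → ℝ) (mid k) = 0 := by
  simp [Pi.single_apply, mid_ne_lst k]

@[simp] lemma single_mid_zero (k : Fin d) : (Pi.single (mid k) 1 : Fin (d+2) → ℝ) 0 = 0 := by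
  simp [Pi.single_apply, (mid_ne_zero k).symm]

@[simp] lemma single_mid_lst (k : Fin d) : (Pi.single (mid k) 1 : Fin (d+2) → ℝ) lst = 0 := by
  simp [Pi.single_apply, (mid_ne_lst k).symm]

@[simp] lemma single_mid_mid (j k : Fin d) :
    (Pi.single (mid j) 1 : Fin (d+2) → ℝ) (mid k) = if k = j then 1 else 0 := by
  simp [Pi.single_apply, mid_inj]

@[simp] lemma single_zero_zero : (Pi.single 0 1 : Fin (d+2) → ℝ) 0 = 1 := by
  simp [Pi.single_apply]
@[simp] lemma single_lst_lst : (Pi.single lst 1 : Fin (d+2) → ℝ) lst = 1 := by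
  simp [Pi.single_apply]


theorem hdiv {E : Type*} [NormedAddCommGroup E] [NormedSpace ℝ E] {f g : E → ℝ}
    {f' g' : E →L[ℝ] ℝ} {x : E} (hf : HasFDerivAt f f' x) (hg : HasFDerivAt g g' x)
    (hx : g x ≠ 0) :
    HasFDerivAt (fun y => f y / g y) ((g x)⁻¹ • f' - (f x / g x ^ 2) • g') x := by
  have hinv : HasFDerivAt (fun y => (g y)⁻¹) ((-((g x) ^ 2)⁻¹) • g') x := by
    have := (hasDerivAt_inv hx).comp_hasFDerivAt x hg
    exact this
  have h := hf.fun_mul hinv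
  simp only [div_eq_mul_inv]
  refine h.congr_fderiv ?_
  ext y
  simp only [ContinuousLinearMap.sub_apply, ContinuousLinearMap.add_apply,
    ContinuousLinearMap.smul_apply, smul_eq_mul]
  ring

section Defs

variable (d : ℕ) (γ α β : ℝ) (i : Fin d)

noncomputable def NN (X : Fin (d+2) → ℝ) : ℝ := ∑ k, X (mid k) ^ 2

noncomputable def gN (X : Fin (d+2) → ℝ) : Fin (d+2) → ℝ :=
  ∑ k, (2 * X (mid k)) • (Pi.single (mid k) 1 : Fin (d+2) → ℝ)

noncomputable def gP (X : Fin (d+2) → ℝ) : Fin (d+2) → ℝ :=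
  (γ-1) • ((Pi.single lst 1 : Fin (d+2) → ℝ) -
    ((2 * X 0)⁻¹ • gN d X - (NN d X / (2 * X 0) ^ 2) • ((2:ℝ) • (Pi.single 0 1 : Fin (d+2) → ℝ))))

noncomputable def phi (X : Fin (d+2) → ℝ) : ℝ :=
  (pOf d γ X * X 0 ^ (-γ)) ^ (1/(α+γ))

noncomputable def gphi (X : Fin (d+2) → ℝ) : Fin (d+2) → ℝ :=
  (1/(α+γ) * (pOf d γ X * X 0 ^ (-γ)) ^ (1/(α+γ) - 1)) •
    (pOf d γ X • ((-γ * X 0 ^ (-γ - 1)) • (Pi.single 0 1 : Fin (d+2) → ℝ)) +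
      (X 0 ^ (-γ)) • gP d γ X)

noncomputable def gS (X : Fin (d+2) → ℝ) : Fin (d+2) → ℝ :=
  (β * X 0) • gphi d γ α X + phi d γ α X • (β • (Pi.single 0 1 : Fin (d+2) → ℝ))

noncomputable def gV (X : Fin (d+2) → ℝ) : Fin (d+2) → ℝ :=
  (X 0)⁻¹ • (Pi.single (mid i) 1 : Fin (d+2) → ℝ) -
    (X (mid i) / X 0 ^ 2) • (Pi.single 0 1 : Fin (d+2) → ℝ)

noncomputable def gQ (X : Fin (d+2) → ℝ) : Fin (d+2) → ℝ :=
  hartenShat d γ α β X • gV d i X + (X (mid i) / X 0) • gS d γ α β X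

noncomputable def gF0 : Fin (d+2) → ℝ := Pi.single (mid i) 1

noncomputable def gFm (j : Fin d) (X : Fin (d+2) → ℝ) : Fin (d+2) → ℝ :=
  ((X 0)⁻¹ • (X (mid i) • (Pi.single (mid j) 1 : Fin (d+2) → ℝ) +
      X (mid j) • (Pi.single (mid i) 1 : Fin (d+2) → ℝ)) -
    (X (mid i) * X (mid j) / X 0 ^ 2) • (Pi.single 0 1 : Fin (d+2) → ℝ)) +
  (if j = i then (1:ℝ) else 0) • gP d γ X

noncomputable def gFe (X : Fin (d+2) → ℝ) : Fin (d+2) → ℝ :=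
  (X 0)⁻¹ • ((X lst + pOf d γ X) • (Pi.single (mid i) 1 : Fin (d+2) → ℝ) +
      X (mid i) • ((Pi.single lst 1 : Fin (d+2) → ℝ) + gP d γ X)) -
    ((X lst + pOf d γ X) * X (mid i) / X 0 ^ 2) • (Pi.single 0 1 : Fin (d+2) → ℝ)

noncomputable def gFall : Fin (d+2) → (Fin (d+2) → ℝ) → (Fin (d+2) → ℝ) :=
  vec3 (fun _ => gF0 d i) (fun j => gFm d γ i j) (gFe d γ i)

end Defs

section HasF

variable {d : ℕ} {γ α β : ℝ} {i : Fin d} {X : Fin (d+2) → ℝ}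

lemma hasF_coord (l : Fin (d+2)) (X : Fin (d+2) → ℝ) :
    HasFDerivAt (fun X : Fin (d+2) → ℝ => X l) (prj l) X :=
  (prj l).hasFDerivAt

lemma hasF_NN (X : Fin (d+2) → ℝ) : HasFDerivAt (NN d) (gradL (d+2) (gN d X)) X := by
  have h : HasFDerivAt (fun X : Fin (d+2) → ℝ => ∑ k, X (mid k) ^ 2)
      (∑ k : Fin d, ((2:ℕ) * X (mid k) ^ (2-1)) • prj (mid k)) X := by
    apply HasFDerivAt.fun_sum
    intro k _
    exact (hasDerivAt_pow 2 (X (mid k))).comp_hasFDerivAt X (hasF_coord (mid k) X)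
  have : gradL (d+2) (gN d X)
      = ∑ k : Fin d, ((2:ℕ) * X (mid k) ^ (2-1)) • prj (mid k) := by
    simp only [gN, _root_.map_sum, _root_.map_smul, gradL_piSingle]
    norm_num
  rw [this]
  exact h

lemma hasF_P (h0 : X 0 ≠ 0) : HasFDerivAt (pOf d γ) (gradL (d+2) (gP d γ X)) X := by
  have hne2 : (2:ℝ) * X 0 ≠ 0 := mul_ne_zero two_ne_zero h0
  have h := ((hasF_coord lst X).sub
    (hdiv (hasF_NN X) ((hasF_coord 0 X).const_mul (2:ℝ)) hne2)).const_mul (γ-1)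
  have he : gradL (d+2) (gP d γ X) = (γ-1) • (prj lst -
      ((2 * X 0)⁻¹ • gradL (d+2) (gN d X) -
        (NN d X / (2 * X 0) ^ 2) • ((2:ℝ) • prj 0))) := by
    simp only [gP, _root_.map_smul, _root_.map_sub, gradL_piSingle]
  rw [he]
  exact h

lemma hasF_phi (h0 : 0 < X 0) (hp : 0 < pOf d γ X) :
    HasFDerivAt (phi d γ α) (gradL (d+2) (gphi d γ α X)) X := by
  have hrp : (0:ℝ) < X 0 ^ (-γ) := Real.rpow_pos_of_pos h0 _
  have hprod : (0:ℝ) < pOf d γ X * X 0 ^ (-γ) := mul_pos hp hrp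
  have hin : HasFDerivAt (fun X : Fin (d+2) → ℝ => pOf d γ X * X 0 ^ (-γ))
      (pOf d γ X • ((-γ * X 0 ^ (-γ - 1)) • prj 0) +
        (X 0 ^ (-γ)) • gradL (d+2) (gP d γ X)) X :=
    (hasF_P h0.ne').mul ((hasF_coord 0 X).rpow_const (Or.inl h0.ne'))
  have h := hin.rpow_const (p := 1/(α+γ)) (Or.inl hprod.ne')
  have he : gradL (d+2) (gphi d γ α X)
      = (1/(α+γ) * (pOf d γ X * X 0 ^ (-γ)) ^ (1/(α+γ) - 1)) •
        (pOf d γ X • ((-γ * X 0 ^ (-γ - 1)) • prj 0) +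
          (X 0 ^ (-γ)) • gradL (d+2) (gP d γ X)) := by
    simp only [gphi, _root_.map_smul, _root_.map_add, gradL_piSingle]
  rw [he]
  exact h

lemma hasF_S (h0 : 0 < X 0) (hp : 0 < pOf d γ X) :
    HasFDerivAt (hartenShat d γ α β) (gradL (d+2) (gS d γ α β X)) X := by
  have h := ((hasF_coord 0 X).const_mul β).mul (hasF_phi (α := α) h0 hp)
  have he : gradL (d+2) (gS d γ α β X)
      = (β * X 0) • gradL (d+2) (gphi d γ α X) +
        phi d γ α X • (β • prj 0) := by
    simp only [gS, _root_.map_smul, _root_.map_add, gradL_piSingle]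
  rw [he]
  exact h

lemma hasF_V (h0 : X 0 ≠ 0) :
    HasFDerivAt (fun X : Fin (d+2) → ℝ => X (mid i) / X 0) (gradL (d+2) (gV d i X)) X := by
  have h := hdiv (hasF_coord (mid i) X) (hasF_coord 0 X) h0
  have he : gradL (d+2) (gV d i X) = (X 0)⁻¹ • prj (mid i) -
      (X (mid i) / X 0 ^ 2) • prj 0 := by
    simp only [gV, _root_.map_smul, _root_.map_sub, gradL_piSingle]
  rw [he]
  exact h

lemma hasF_Q (h0 : 0 < X 0) (hp : 0 < pOf d γ X) :
    HasFDerivAt (fun X => hartenShat d γ α β X * vOf d X i)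
      (gradL (d+2) (gQ d γ α β i X)) X := by
  have h := (hasF_S (α := α) (β := β) h0 hp).mul (hasF_V (i := i) h0.ne')
  have he : gradL (d+2) (gQ d γ α β i X)
      = hartenShat d γ α β X • gradL (d+2) (gV d i X) +
        (X (mid i) / X 0) • gradL (d+2) (gS d γ α β X) := by
    simp only [gQ, _root_.map_smul, map_add]
  rw [he]
  exact h

lemma hasF_F0 (X : Fin (d+2) → ℝ) :
    HasFDerivAt (fun X : Fin (d+2) → ℝ => X (mid i)) (gradL (d+2) (gF0 d i)) X := by
  have he : gradL (d+2) (gF0 d i) = prj (mid i) := by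
    simp only [gF0, gradL_piSingle]
  rw [he]
  exact hasF_coord (mid i) X

lemma hasF_Fm (j : Fin d) (h0 : X 0 ≠ 0) :
    HasFDerivAt (fun X : Fin (d+2) → ℝ =>
        X (mid i) * X (mid j) / X 0 + pOf d γ X * (if j = i then (1:ℝ) else 0))
      (gradL (d+2) (gFm d γ i j X)) X := by
  have h := (hdiv ((hasF_coord (mid i) X).mul (hasF_coord (mid j) X))
      (hasF_coord 0 X) h0).add ((hasF_P (γ := γ) h0).mul_const (if j = i then (1:ℝ) else 0))
  have he : gradL (d+2) (gFm d γ i j X)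
      = ((X 0)⁻¹ • (X (mid i) • prj (mid j) +
            X (mid j) • prj (mid i)) -
          (X (mid i) * X (mid j) / X 0 ^ 2) • prj 0) +
        (if j = i then (1:ℝ) else 0) • gradL (d+2) (gP d γ X) := by
    simp only [gFm, _root_.map_smul, _root_.map_add, _root_.map_sub, gradL_piSingle]
  rw [he]
  exact h

lemma hasF_Fe (h0 : X 0 ≠ 0) :
    HasFDerivAt (fun X : Fin (d+2) → ℝ => (X lst + pOf d γ X) * X (mid i) / X 0)
      (gradL (d+2) (gFe d γ i X)) X := by
  have h := hdiv (((hasF_coord lst X).add (hasF_P (γ := γ) h0)).mul (hasF_coord (mid i) X))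
      (hasF_coord 0 X) h0
  have he : gradL (d+2) (gFe d γ i X)
      = (X 0)⁻¹ • ((X lst + pOf d γ X) • prj (mid i) +
            X (mid i) • (prj lst + gradL (d+2) (gP d γ X))) -
        ((X lst + pOf d γ X) * X (mid i) / X 0 ^ 2) • prj 0 := by
    simp only [gFe, _root_.map_smul, _root_.map_add, _root_.map_sub, gradL_piSingle]
  rw [he]
  exact h

end HasF

section Evals

variable {d : ℕ} {γ α β : ℝ} {i : Fin d} {X : Fin (d+2) → ℝ}

lemma gN_zero : gN d X 0 = 0 := by
  simp [gN, Finset.sum_apply, Pi.smul_apply]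

lemma gN_lst : gN d X lst = 0 := by
  simp [gN, Finset.sum_apply, Pi.smul_apply]

lemma gN_mid (k : Fin d) : gN d X (mid k) = 2 * X (mid k) := by
  simp [gN, Finset.sum_apply, Pi.smul_apply, single_mid_mid, mul_ite, Finset.sum_ite_eq]

lemma gP_zero (h0 : X 0 ≠ 0) : gP d γ X 0 = (γ-1) * NN d X / (2 * X 0 ^ 2) := by
  simp only [gP, Pi.smul_apply, Pi.sub_apply, single_lst_zero, single_zero_zero, gN_zero,
    smul_eq_mul, mul_zero, mul_one]
  field_simp
  ring

lemma gP_mid (h0 : X 0 ≠ 0) (k : Fin d) : gP d γ X (mid k) = -((γ-1) * X (mid k) / X 0) := by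
  simp only [gP, Pi.smul_apply, Pi.sub_apply, single_lst_mid, single_zero_mid, gN_mid,
    smul_eq_mul, mul_zero, mul_one]
  field_simp
  ring

lemma gP_lst : gP d γ X lst = γ - 1 := by
  simp [gP, Pi.smul_apply, Pi.sub_apply, gN_lst]

lemma phi_pos (h0 : 0 < X 0) (hp : 0 < pOf d γ X) : 0 < phi d γ α X :=
  Real.rpow_pos_of_pos (mul_pos hp (Real.rpow_pos_of_pos h0 _)) _

lemma rpow_sub_one' (h0 : 0 < X 0) (hp : 0 < pOf d γ X) :
    (pOf d γ X * X 0 ^ (-γ)) ^ (1/(α+γ) - 1)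
      = phi d γ α X / (pOf d γ X * X 0 ^ (-γ)) := by
  rw [Real.rpow_sub (mul_pos hp (Real.rpow_pos_of_pos h0 _)), Real.rpow_one, phi]

lemma rpow_neg_gamma_sub_one (h0 : 0 < X 0) :
    X 0 ^ (-γ - 1) = X 0 ^ (-γ) / X 0 := by
  rw [Real.rpow_sub h0, Real.rpow_one]

lemma gS_zero (h0 : 0 < X 0) (hp : 0 < pOf d γ X) :
    gS d γ α β X 0 = β * phi d γ α X * (1 - γ * (1/(α+γ)))
      + β * (1/(α+γ)) * phi d γ α X * (γ-1) * NN d X / (2 * X 0 * pOf d γ X) := by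
  have hA : (0:ℝ) < X 0 ^ (-γ) := Real.rpow_pos_of_pos h0 _
  simp only [gS, gphi, Pi.add_apply, Pi.smul_apply, smul_eq_mul, single_zero_zero,
    gP_zero h0.ne', mul_one, rpow_sub_one' h0 hp, rpow_neg_gamma_sub_one h0]
  set th := 1/(α+γ) with hth
  field_simp
  ring

lemma gS_mid (h0 : 0 < X 0) (hp : 0 < pOf d γ X) (k : Fin d) :
    gS d γ α β X (mid k)
      = -(β * (1/(α+γ)) * phi d γ α X * (γ-1) * X (mid k) / pOf d γ X) := by
  have hA : (0:ℝ) < X 0 ^ (-γ) := Real.rpow_pos_of_pos h0 _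
  simp only [gS, gphi, Pi.add_apply, Pi.smul_apply, smul_eq_mul, single_zero_mid,
    gP_mid h0.ne', mul_zero, add_zero, zero_add, rpow_sub_one' h0 hp]
  set th := 1/(α+γ) with hth
  field_simp

lemma gS_lst (h0 : 0 < X 0) (hp : 0 < pOf d γ X) :
    gS d γ α β X lst = β * (1/(α+γ)) * phi d γ α X * (γ-1) * X 0 / pOf d γ X := by
  have hA : (0:ℝ) < X 0 ^ (-γ) := Real.rpow_pos_of_pos h0 _
  simp only [gS, gphi, Pi.add_apply, Pi.smul_apply, smul_eq_mul, single_zero_lst,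
    gP_lst, mul_zero, add_zero, zero_add, rpow_sub_one' h0 hp]
  set th := 1/(α+γ) with hth
  field_simp

end Evals

section Compat

variable {d : ℕ} {γ α β : ℝ} {i : Fin d} {X : Fin (d+2) → ℝ}

lemma fin3_elim {d : ℕ} {motive : Fin (d+2) → Prop} (zero : motive 0)
    (mid' : ∀ k, motive (mid k)) (last' : motive lst) : ∀ c, motive c := by
  intro c
  induction c using Fin.cases with
  | zero => exact zero
  | succ l' =>
    induction l' using Fin.lastCases with
    | last => exact last'
    | cast k => rw [Fin.succ_castSucc]; exact mid' k

lemma Shat_eq : hartenShat d γ α β X = β * X 0 * phi d γ α X := rfl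

lemma pOf_eq : pOf d γ X = (γ-1) * (X lst - NN d X / (2 * X 0)) := rfl

lemma lst_eq (hγ1 : γ - 1 ≠ 0) (h0 : X 0 ≠ 0) :
    X lst = pOf d γ X / (γ-1) + NN d X / (2 * X 0) := by
  rw [pOf_eq]
  field_simp <;> ring

lemma compat_zero (hγ1 : γ - 1 ≠ 0) (h0 : 0 < X 0) (hp : 0 < pOf d γ X) :
    gQ d γ α β i X 0 = gS d γ α β X 0 * gF0 d i 0
      + ((∑ j, gS d γ α β X (mid j) * gFm d γ i j X 0)
        + gS d γ α β X lst * gFe d γ i X 0) := by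
  have h0' := h0.ne'
  have hp' := hp.ne'
  have h1 : ∀ j : Fin d, gS d γ α β X (mid j) * gFm d γ i j X 0
      = (β * (1/(α+γ)) * phi d γ α X * (γ-1)/(pOf d γ X * X 0^2) * X (mid i)) * X (mid j)^2
        + (if j = i then (-(β * (1/(α+γ)) * phi d γ α X * (γ-1) * X (mid i)/pOf d γ X))
            * ((γ-1)*NN d X/(2*X 0^2)) else 0) := by
    intro j
    rw [gS_mid h0 hp]
    simp only [gFm, Pi.add_apply, Pi.sub_apply, Pi.smul_apply, smul_eq_mul,
      single_mid_zero, single_zero_zero, gP_zero h0', mul_zero, add_zero, zero_add,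
      mul_one, zero_sub]
    rcases eq_or_ne j i with h | h
    · subst h
      simp only [if_pos rfl, if_true]
      generalize (1:ℝ)/(α+γ) = th
      field_simp <;> ring
    · simp only [if_neg h]
      generalize (1:ℝ)/(α+γ) = th
      field_simp <;> ring
  rw [Finset.sum_congr rfl (fun j _ => h1 j), Finset.sum_add_distrib, ← Finset.mul_sum,
    Finset.sum_ite_eq' Finset.univ i, if_pos (Finset.mem_univ i)]
  have hNN : ∑ j, X (mid j)^2 = NN d X := rfl
  rw [hNN]
  simp only [gQ, Pi.add_apply, Pi.smul_apply, smul_eq_mul, gV, Pi.sub_apply,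
    single_mid_zero, single_zero_zero, mul_zero, mul_one, zero_sub,
    gF0, gFe, single_zero_mid, single_lst_zero, single_zero_lst, gP_zero h0',
    gS_zero h0 hp, gS_mid h0 hp, gS_lst h0 hp, Shat_eq, zero_add, add_zero]
  rw [lst_eq hγ1 h0']
  generalize (1:ℝ)/(α+γ) = th
  field_simp <;> ring

lemma compat_mid (hγ1 : γ - 1 ≠ 0) (h0 : 0 < X 0) (hp : 0 < pOf d γ X) (k : Fin d) :
    gQ d γ α β i X (mid k) = gS d γ α β X 0 * gF0 d i (mid k)
      + ((∑ j, gS d γ α β X (mid j) * gFm d γ i j X (mid k))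
        + gS d γ α β X lst * gFe d γ i X (mid k)) := by
  have h0' := h0.ne'
  have hp' := hp.ne'
  have h1 : ∀ j : Fin d, gS d γ α β X (mid j) * gFm d γ i j X (mid k)
      = ((if k = i then (1:ℝ) else 0)
            * (-(β * (1/(α+γ)) * phi d γ α X * (γ-1)/(pOf d γ X * X 0)))) * X (mid j)^2
        + ((if k = j then -(β * (1/(α+γ)) * phi d γ α X * (γ-1) * X (mid k) * X (mid i)
              /(pOf d γ X * X 0)) else 0)
          + (if j = i then β * (1/(α+γ)) * phi d γ α X * (γ-1) * (γ-1) * X (mid i) * X (mid k)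
              /(pOf d γ X * X 0) else 0)) := by
    intro j
    rw [gS_mid h0 hp]
    simp only [gFm, Pi.add_apply, Pi.sub_apply, Pi.smul_apply, smul_eq_mul,
      single_mid_mid, single_zero_mid, gP_mid h0', mul_zero, add_zero, zero_add, sub_zero]
    rcases eq_or_ne k j with hkj | hkj
    · subst hkj
      rcases eq_or_ne k i with hki | hki
      · subst hki
        simp only [if_pos rfl, if_true]
        generalize (1:ℝ)/(α+γ) = th
        field_simp <;> ring
      · simp only [if_pos rfl, if_true, if_neg hki]
        generalize (1:ℝ)/(α+γ) = th
        field_simp <;> ring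
    · rcases eq_or_ne j i with hji | hji
      · subst hji
        simp only [if_pos rfl, if_true, if_neg hkj]
        generalize (1:ℝ)/(α+γ) = th
        field_simp <;> ring
      · simp only [if_neg hkj, if_neg hji]
        rcases eq_or_ne k i with hki | hki
        · simp only [if_pos hki, hki]
          generalize (1:ℝ)/(α+γ) = th
          field_simp <;> ring
        · simp only [if_neg hki]
          simp
  rw [Finset.sum_congr rfl (fun j _ => h1 j), Finset.sum_add_distrib, ← Finset.mul_sum,
    Finset.sum_add_distrib, Finset.sum_ite_eq Finset.univ k, Finset.sum_ite_eq' Finset.univ i,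
    if_pos (Finset.mem_univ k), if_pos (Finset.mem_univ i)]
  have hNN : ∑ j, X (mid j)^2 = NN d X := rfl
  rw [hNN]
  simp only [gQ, Pi.add_apply, Pi.smul_apply, smul_eq_mul, gV, Pi.sub_apply,
    single_mid_mid, single_zero_mid, mul_zero, mul_one, sub_zero,
    gF0, gFe, single_lst_mid, gP_mid h0',
    gS_zero h0 hp, gS_mid h0 hp, gS_lst h0 hp, Shat_eq, zero_add, add_zero]
  rw [lst_eq hγ1 h0']
  rcases eq_or_ne k i with hki | hki
  · simp only [if_pos hki, hki]
    generalize (1:ℝ)/(α+γ) = th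
    field_simp <;> ring
  · simp only [if_neg hki]
    generalize (1:ℝ)/(α+γ) = th
    field_simp <;> ring

lemma compat_lst (hγ1 : γ - 1 ≠ 0) (h0 : 0 < X 0) (hp : 0 < pOf d γ X) :
    gQ d γ α β i X lst = gS d γ α β X 0 * gF0 d i lst
      + ((∑ j, gS d γ α β X (mid j) * gFm d γ i j X lst)
        + gS d γ α β X lst * gFe d γ i X lst) := by
  have h0' := h0.ne'
  have hp' := hp.ne'
  have h1 : ∀ j : Fin d, gS d γ α β X (mid j) * gFm d γ i j X lst
      = (if j = i then -(β * (1/(α+γ)) * phi d γ α X * (γ-1) * X (mid i) * (γ-1)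
          / pOf d γ X) else 0) := by
    intro j
    rw [gS_mid h0 hp]
    simp only [gFm, Pi.add_apply, Pi.sub_apply, Pi.smul_apply, smul_eq_mul,
      single_mid_lst, single_zero_lst, gP_lst, mul_zero, add_zero, zero_add, sub_zero,
      zero_sub, mul_one]
    rcases eq_or_ne j i with h | h
    · subst h
      simp only [if_pos rfl, if_true]
      generalize (1:ℝ)/(α+γ) = th
      field_simp <;> ring
    · simp only [if_neg h, mul_zero, zero_mul]
  rw [Finset.sum_congr rfl (fun j _ => h1 j), Finset.sum_ite_eq' Finset.univ i,
    if_pos (Finset.mem_univ i)]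
  simp only [gQ, Pi.add_apply, Pi.smul_apply, smul_eq_mul, gV, Pi.sub_apply,
    single_mid_lst, single_zero_lst, mul_zero, sub_zero,
    gF0, gFe, single_lst_lst, gP_lst,
    gS_zero h0 hp, gS_mid h0 hp, gS_lst h0 hp, Shat_eq, zero_add, add_zero]
  generalize (1:ℝ)/(α+γ) = th
  field_simp <;> ring

lemma compat (hγ1 : γ - 1 ≠ 0) (h0 : 0 < X 0) (hp : 0 < pOf d γ X) (c : Fin (d+2)) :
    gQ d γ α β i X c = ∑ l, gS d γ α β X l * gFall d γ i l X c := by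
  rw [sum_fin3 (fun l => gS d γ α β X l * gFall d γ i l X c)]
  simp only [gFall, vec3_zero, vec3_mid, vec3_lst]
  exact fin3_elim (motive := fun c => gQ d γ α β i X c = gS d γ α β X 0 * gF0 d i c
      + ((∑ j, gS d γ α β X (mid j) * gFm d γ i j X c)
        + gS d γ α β X lst * gFe d γ i X c))
    (compat_zero hγ1 h0 hp) (fun k => compat_mid hγ1 h0 hp k) (compat_lst hγ1 h0 hp) c

end Compat

section Diff

variable {d : ℕ} {γ α β : ℝ} {i : Fin d} {Y : Fin (d+2) → ℝ}


lemma diffDiv {E : Type*} [NormedAddCommGroup E] [NormedSpace ℝ E] {f g : E → ℝ} {x : E}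
    (hf : DifferentiableAt ℝ f x) (hg : DifferentiableAt ℝ g x) (hx : g x ≠ 0) :
    DifferentiableAt ℝ (fun y => f y / g y) x :=
  (hdiv hf.hasFDerivAt hg.hasFDerivAt hx).differentiableAt

lemma diff_coord (l : Fin (d+2)) : DifferentiableAt ℝ (fun X : Fin (d+2) → ℝ => X l) Y :=
  (hasF_coord l Y).differentiableAt

lemma diff_NN : DifferentiableAt ℝ (NN d) Y := (hasF_NN Y).differentiableAt

lemma diff_P (h0 : Y 0 ≠ 0) : DifferentiableAt ℝ (pOf d γ) Y :=
  (hasF_P h0).differentiableAt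

lemma diff_gN (l : Fin (d+2)) : DifferentiableAt ℝ (fun X => gN d X l) Y := by
  simp only [gN, Finset.sum_apply, Pi.smul_apply, smul_eq_mul]
  exact DifferentiableAt.fun_sum fun k _ => ((diff_coord (mid k)).const_mul 2).mul_const _

lemma diff_gP (l : Fin (d+2)) (h0 : Y 0 ≠ 0) :
    DifferentiableAt ℝ (fun X => gP d γ X l) Y := by
  have h2 : (2:ℝ) * Y 0 ≠ 0 := mul_ne_zero two_ne_zero h0
  simp only [gP, Pi.smul_apply, Pi.sub_apply, smul_eq_mul]
  apply DifferentiableAt.const_mul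
  apply DifferentiableAt.sub (differentiableAt_const _)
  apply DifferentiableAt.sub
  · exact (((differentiableAt_const (2:ℝ)).mul (diff_coord 0)).inv h2).mul (diff_gN l)
  · exact ((diffDiv diff_NN (((differentiableAt_const (2:ℝ)).mul (diff_coord 0)).pow 2)
      (pow_ne_zero 2 h2)).mul_const _)

lemma diff_gphi (l : Fin (d+2)) (h0 : 0 < Y 0) (hp : 0 < pOf d γ Y) :
    DifferentiableAt ℝ (fun X => gphi d γ α X l) Y := by
  have h0' := h0.ne'
  have hprod : pOf d γ Y * Y 0 ^ (-γ) ≠ 0 :=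
    (mul_pos hp (Real.rpow_pos_of_pos h0 _)).ne'
  simp only [gphi, Pi.smul_apply, Pi.add_apply, smul_eq_mul]
  apply DifferentiableAt.mul
  · exact (((diff_P h0').mul ((diff_coord 0).rpow_const (Or.inl h0'))).rpow_const
      (Or.inl hprod)).const_mul _
  · apply DifferentiableAt.add
    · exact (diff_P h0').mul ((((diff_coord 0).rpow_const (Or.inl h0')).const_mul
        (-γ)).mul_const _)
    · exact ((diff_coord 0).rpow_const (Or.inl h0')).mul (diff_gP l h0')

lemma diff_phi (h0 : 0 < Y 0) (hp : 0 < pOf d γ Y) :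
    DifferentiableAt ℝ (phi d γ α) Y := (hasF_phi h0 hp).differentiableAt

lemma diff_S (h0 : 0 < Y 0) (hp : 0 < pOf d γ Y) :
    DifferentiableAt ℝ (hartenShat d γ α β) Y := (hasF_S h0 hp).differentiableAt

lemma diff_gS (l : Fin (d+2)) (h0 : 0 < Y 0) (hp : 0 < pOf d γ Y) :
    DifferentiableAt ℝ (fun X => gS d γ α β X l) Y := by
  simp only [gS, Pi.add_apply, Pi.smul_apply, smul_eq_mul]
  exact (((diff_coord 0).const_mul β).mul (diff_gphi l h0 hp)).add
    ((diff_phi h0 hp).mul_const _)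

lemma diff_gV (l : Fin (d+2)) (h0 : Y 0 ≠ 0) :
    DifferentiableAt ℝ (fun X => gV d i X l) Y := by
  simp only [gV, Pi.sub_apply, Pi.smul_apply, smul_eq_mul]
  exact (((diff_coord 0).inv h0).mul_const _).sub
    ((diffDiv (diff_coord (mid i)) ((diff_coord 0).pow 2) (pow_ne_zero 2 h0)).mul_const _)

lemma diff_gQ (l : Fin (d+2)) (h0 : 0 < Y 0) (hp : 0 < pOf d γ Y) :
    DifferentiableAt ℝ (fun X => gQ d γ α β i X l) Y := by
  simp only [gQ, Pi.add_apply, Pi.smul_apply, smul_eq_mul]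
  exact ((diff_S h0 hp).mul (diff_gV l h0.ne')).add
    ((diffDiv (diff_coord (mid i)) (diff_coord 0) h0.ne').mul (diff_gS l h0 hp))

lemma diff_gF0 (l : Fin (d+2)) : DifferentiableAt ℝ (fun _ : Fin (d+2) → ℝ => gF0 d i l) Y :=
  differentiableAt_const _

lemma diff_gFm (j : Fin d) (l : Fin (d+2)) (h0 : Y 0 ≠ 0) :
    DifferentiableAt ℝ (fun X => gFm d γ i j X l) Y := by
  simp only [gFm, Pi.add_apply, Pi.sub_apply, Pi.smul_apply, smul_eq_mul]
  apply DifferentiableAt.add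
  · apply DifferentiableAt.sub
    · exact ((diff_coord 0).inv h0).mul
        (((diff_coord (mid i)).mul_const _).add ((diff_coord (mid j)).mul_const _))
    · exact (diffDiv ((diff_coord (mid i)).mul (diff_coord (mid j))) ((diff_coord 0).pow 2)
        (pow_ne_zero 2 h0)).mul_const _
  · exact (diff_gP l h0).const_mul _

lemma diff_gFe (l : Fin (d+2)) (h0 : Y 0 ≠ 0) :
    DifferentiableAt ℝ (fun X => gFe d γ i X l) Y := by
  simp only [gFe, Pi.add_apply, Pi.sub_apply, Pi.smul_apply, smul_eq_mul]
  apply DifferentiableAt.sub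
  · apply DifferentiableAt.mul ((diff_coord 0).inv h0)
    apply DifferentiableAt.add
    · exact ((diff_coord lst).add (diff_P h0)).mul_const _
    · exact (diff_coord (mid i)).mul ((differentiableAt_const _).add (diff_gP l h0))
  · exact (diffDiv (((diff_coord lst).add (diff_P h0)).mul (diff_coord (mid i)))
      ((diff_coord 0).pow 2) (pow_ne_zero 2 h0)).mul_const _

lemma diff_gFall (l c : Fin (d+2)) (h0 : Y 0 ≠ 0) :
    DifferentiableAt ℝ (fun X => gFall d γ i l X c) Y := by
  induction l using fin3_elim with
  | zero => simp only [gFall, vec3_zero]; exact diff_gF0 c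
  | mid' k => simp only [gFall, vec3_mid]; exact diff_gFm k c h0
  | last' => simp only [gFall, vec3_lst]; exact diff_gFe c h0

end Diff

section Flux

variable {d : ℕ} {γ α β : ℝ} {i : Fin d} {X : Fin (d+2) → ℝ}

lemma flux_comp_zero (h0 : X 0 ≠ 0) : fluxHat d γ i X 0 = X (mid i) := by
  show X 0 * vOf d X i = X (mid i)
  simp only [vOf, mid]
  field_simp [mul_comm]

lemma flux_comp_mid (j : Fin d) (h0 : X 0 ≠ 0) :
    fluxHat d γ i X (mid j)
      = X (mid i) * X (mid j) / X 0 + pOf d γ X * (if j = i then 1 else 0) := by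
  have hm : (mid j : Fin (d+2)) = Fin.succ (Fin.castSucc j) := (Fin.succ_castSucc j).symm
  rw [fluxHat, eulerFlux, hm, Fin.cons_succ, Fin.snoc_castSucc]
  have : X 0 * vOf d X i * vOf d X j = X (mid i) * X (mid j) / X 0 := by
    simp only [vOf, mid]
    field_simp <;> ring
  rw [this]
  rfl

lemma flux_comp_lst (hγ1 : γ - 1 ≠ 0) (h0 : X 0 ≠ 0) :
    fluxHat d γ i X lst = (X lst + pOf d γ X) * X (mid i) / X 0 := by
  have hm : (lst : Fin (d+2)) = Fin.succ (Fin.last d) := rfl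
  rw [fluxHat, eulerFlux, hm, Fin.cons_succ, Fin.snoc_last]
  have hsum : ∑ k, vOf d X k ^ 2 = NN d X / X 0 ^ 2 := by
    rw [NN, Finset.sum_div]
    refine Finset.sum_congr rfl fun k _ => ?_
    rw [vOf, div_pow]
    rfl
  have hE' : X (Fin.last d).succ = pOf d γ X / (γ-1) + NN d X / (2 * X 0) :=
    lst_eq hγ1 h0
  rw [hsum, hE']
  simp only [vOf, mid]
  field_simp

lemma hasF_flux_comp (hγ1 : γ - 1 ≠ 0) (hev : ∀ᶠ Y in nhds X, 0 < Y 0 ∧ 0 < pOf d γ Y)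
    (h0 : 0 < X 0) (hp : 0 < pOf d γ X) (l : Fin (d+2)) :
    HasFDerivAt (fun X => fluxHat d γ i X l) (gradL (d+2) (gFall d γ i l X)) X := by
  induction l using fin3_elim with
  | zero =>
    simp only [gFall, vec3_zero]
    refine (hasF_F0 (i := i) X).congr_of_eventuallyEq ?_
    filter_upwards [hev] with Y hY
    rw [flux_comp_zero hY.1.ne']
  | mid' k =>
    simp only [gFall, vec3_mid]
    refine (hasF_Fm (γ := γ) (i := i) k h0.ne').congr_of_eventuallyEq ?_
    filter_upwards [hev] with Y hY
    rw [flux_comp_mid k hY.1.ne']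
  | last' =>
    simp only [gFall, vec3_lst]
    refine (hasF_Fe (γ := γ) (i := i) h0.ne').congr_of_eventuallyEq ?_
    filter_upwards [hev] with Y hY
    rw [flux_comp_lst hγ1 hY.1.ne']

end Flux

end HartenAux

open HartenAux in
/-- Under the Harten setup, for every conservative state `U` in
`D = {(ρ, m, e) : ρ > 0, (γ−1)(e − ‖m‖²/(2ρ)) > 0}` and every `i`, the product
`Hess Ŝ(U) · J_i(U)` of the Hessian of Harten's entropy function and the Euler flux
Jacobian is symmetric; equivalently `Hess Ŝ(U)·J_i(U) = J_i(U)ᵀ·Hess Ŝ(U)`. -/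
theorem hessShat_mul_jacFluxHat_isSymm
    (d : ℕ) (hd : 1 ≤ d) (γ α β : ℝ) (hγ : 1 < γ) (hα : 0 < α ∨ α < -γ)
    (hβ : β = -(γ + α) / (γ - 1))
    (U : Fin (d + 2) → ℝ) (hρ : 0 < U 0) (hp : 0 < pOf d γ U) (i : Fin d) :
    (hessShat d γ α β U * jacFluxHat d γ i U).IsSymm ∧
      hessShat d γ α β U * jacFluxHat d γ i U
        = (jacFluxHat d γ i U)ᵀ * hessShat d γ α β U := by
  have hγ1 : γ - 1 ≠ 0 := sub_ne_zero.2 hγ.ne'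
  have hev : ∀ᶠ X in nhds U, 0 < X 0 ∧ 0 < pOf d γ X := by
    have h1 : ∀ᶠ X in nhds U, 0 < X 0 :=
      (continuous_apply (0 : Fin (d+2))).continuousAt.eventually (eventually_gt_nhds hρ)
    have h2 : ∀ᶠ X in nhds U, 0 < pOf d γ X :=
      (diff_P (γ := γ) hρ.ne').continuousAt.eventually (eventually_gt_nhds hp)
    exact h1.and h2
  have keyS := key (hartenShat d γ α β) (gS d γ α β) U
    (hev.mono fun X hX => hasF_S hX.1 hX.2)
    (fun l => diff_gS l hρ hp)
  have keyQ := key (fun X => hartenShat d γ α β X * vOf d X i) (gQ d γ α β i) U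
    (hev.mono fun X hX => hasF_Q hX.1 hX.2)
    (fun l => diff_gQ l hρ hp)
  have keyF : ∀ l : Fin (d+2),
      (∀ k j, fderiv ℝ (fun X => fderiv ℝ (fun X => fluxHat d γ i X l) X (Pi.single k 1)) U
          (Pi.single j 1)
        = fderiv ℝ (fun X => gFall d γ i l X k) U (Pi.single j 1)) ∧
      (∀ k j, fderiv ℝ (fun X => gFall d γ i l X k) U (Pi.single j 1)
        = fderiv ℝ (fun X => gFall d γ i l X j) U (Pi.single k 1)) := by
    intro l
    refine key (fun X => fluxHat d γ i X l) (fun X => gFall d γ i l X) U ?_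
      (fun c => diff_gFall l c hρ.ne')
    filter_upwards [eventually_eventually_nhds.2 hev, hev] with X hXev hX
    exact hasF_flux_comp hγ1 hXev hX.1 hX.2 l
  -- Jacobian entries
  have hfl : ∀ l, HasFDerivAt (fun X => fluxHat d γ i X l)
      (gradL (d+2) (gFall d γ i l U)) U :=
    fun l => hasF_flux_comp hγ1 hev hρ hp l
  have hflux : HasFDerivAt (fluxHat d γ i)
      (ContinuousLinearMap.pi (fun l => gradL (d+2) (gFall d γ i l U))) U :=
    hasFDerivAt_pi.2 hfl
  have hJ : ∀ l c, jacFluxHat d γ i U l c = gFall d γ i l U c := by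
    intro l c
    show fderiv ℝ (fluxHat d γ i) U (Pi.single c 1) l = _
    rw [hflux.fderiv]
    simp only [ContinuousLinearMap.pi_apply, gradL_single]
  have hH : ∀ j k, hessShat d γ α β U j k
      = fderiv ℝ (fun X => gS d γ α β X k) U (Pi.single j 1) := by
    intro j k
    exact keyS.1 k j
  -- differentiated compatibility
  have hQD : ∀ c j, fderiv ℝ (fun X => gQ d γ α β i X c) U (Pi.single j 1)
      = ∑ l, (gS d γ α β U l * fderiv ℝ (fun X => gFall d γ i l X c) U (Pi.single j 1)
        + gFall d γ i l U c * fderiv ℝ (fun X => gS d γ α β X l) U (Pi.single j 1)) := by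
    intro c j
    have heq : (fun X => gQ d γ α β i X c)
        =ᶠ[nhds U] fun X => ∑ l, gS d γ α β X l * gFall d γ i l X c :=
      hev.mono fun X hX => compat hγ1 hX.1 hX.2 c
    have hRHS : HasFDerivAt (fun X => ∑ l, gS d γ α β X l * gFall d γ i l X c)
        (∑ l, (gS d γ α β U l • fderiv ℝ (fun X => gFall d γ i l X c) U
          + gFall d γ i l U c • fderiv ℝ (fun X => gS d γ α β X l) U)) U := by
      apply HasFDerivAt.fun_sum
      intro l _
      exact (diff_gS l hρ hp).hasFDerivAt.mul (diff_gFall l c hρ.ne').hasFDerivAt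
    rw [heq.fderiv_eq, hRHS.fderiv]
    simp only [ContinuousLinearMap.coe_sum', Finset.sum_apply, ContinuousLinearMap.add_apply,
      ContinuousLinearMap.coe_smul', Pi.smul_apply, smul_eq_mul]
  -- core symmetry
  have hcore : ∀ j c,
      ∑ l, gFall d γ i l U c * fderiv ℝ (fun X => gS d γ α β X l) U (Pi.single j 1)
      = ∑ l, gFall d γ i l U j * fderiv ℝ (fun X => gS d γ α β X l) U (Pi.single c 1) := by
    intro j c
    have h1 := hQD c j
    have h2 := hQD j c
    rw [keyQ.2 c j] at h1
    have h12 := h1.symm.trans h2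
    rw [Finset.sum_add_distrib, Finset.sum_add_distrib] at h12
    have h3 : ∑ l, gS d γ α β U l * fderiv ℝ (fun X => gFall d γ i l X c) U (Pi.single j 1)
        = ∑ l, gS d γ α β U l * fderiv ℝ (fun X => gFall d γ i l X j) U (Pi.single c 1) :=
      Finset.sum_congr rfl fun l _ => by rw [(keyF l).2 c j]
    rw [h3] at h12
    exact add_left_cancel h12
  have hentry : ∀ j c, (hessShat d γ α β U * jacFluxHat d γ i U) j c
      = ∑ l, fderiv ℝ (fun X => gS d γ α β X l) U (Pi.single j 1) * gFall d γ i l U c := by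
    intro j c
    rw [Matrix.mul_apply]
    exact Finset.sum_congr rfl fun l _ => by rw [hH j l, hJ l c]
  have hsymE : ∀ j c, (hessShat d γ α β U * jacFluxHat d γ i U) j c
      = (hessShat d γ α β U * jacFluxHat d γ i U) c j := by
    intro j c
    rw [hentry, hentry]
    calc ∑ l, fderiv ℝ (fun X => gS d γ α β X l) U (Pi.single j 1) * gFall d γ i l U c
        = ∑ l, gFall d γ i l U c * fderiv ℝ (fun X => gS d γ α β X l) U (Pi.single j 1) :=
          Finset.sum_congr rfl fun l _ => mul_comm _ _
      _ = ∑ l, gFall d γ i l U j * fderiv ℝ (fun X => gS d γ α β X l) U (Pi.single c 1) :=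
          hcore j c
      _ = ∑ l, fderiv ℝ (fun X => gS d γ α β X l) U (Pi.single c 1) * gFall d γ i l U j :=
          Finset.sum_congr rfl fun l _ => mul_comm _ _
  constructor
  · ext j c
    rw [Matrix.transpose_apply]
    exact hsymE c j
  · ext j c
    rw [hsymE j c, hentry]
    rw [Matrix.mul_apply]
    refine Finset.sum_congr rfl fun l _ => ?_
    rw [Matrix.transpose_apply, hJ l j, hH l c, keyS.2 c l]
    ring
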